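/- For all q×q invertible complex matrices A, B and all real s, one has s·A^{−1} + (1−s)·B^{−1} − (s·A + (1−s)·B)^{−1} = s(1−s)·A^{−1}(B−A)B^{−1}·(s·B^{−1} + (1−s)·A^{−1})^{−1}·A^{−1}(B−A)B^{−1}, whenever s·A + (1−s)·B and s·B^{−1} + (1−s)·A^{−1} are invertible. -/
import Mathlib


open Matrix

theorem statement11 {q : ℕ}
    (A B : Matrix (Fin q) (Fin q) ℂ) (s : ℝ)
    (hA : IsUnit A.det) (hB : IsUnit B.det)
    (hAB : IsUnit ((s : ℂ) • A + ((1 : ℂ) - (s : ℂ)) • B).det)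
    (hBA : IsUnit ((s : ℂ) • B⁻¹ + ((1 : ℂ) - (s : ℂ)) • A⁻¹).det) :
    (s : ℂ) • A⁻¹ + ((1 : ℂ) - (s : ℂ)) • B⁻¹ -
        ((s : ℂ) • A + ((1 : ℂ) - (s : ℂ)) • B)⁻¹ =
      ((s : ℂ) * ((1 : ℂ) - (s : ℂ))) •
        (A⁻¹ * (B - A) * B⁻¹ *
          ((s : ℂ) • B⁻¹ + ((1 : ℂ) - (s : ℂ)) • A⁻¹)⁻¹ *
          (A⁻¹ * (B - A) * B⁻¹)) := by
  have hAi : A * A⁻¹ = 1 := Matrix.mul_nonsing_inv A hA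
  have hAi' : A⁻¹ * A = 1 := Matrix.nonsing_inv_mul A hA
  have hBi : B * B⁻¹ = 1 := Matrix.mul_nonsing_inv B hB
  have hBi' : B⁻¹ * B = 1 := Matrix.nonsing_inv_mul B hB
  set X := A⁻¹ with hX
  set Y := B⁻¹ with hY
  set D := (s : ℂ) • Y + ((1 : ℂ) - (s : ℂ)) • X with hD
  have hDi : D⁻¹ * D = 1 := Matrix.nonsing_inv_mul D hBA
  have hM : X * (B - A) * Y = X - Y := by
    rw [Matrix.mul_sub, Matrix.sub_mul, mul_assoc, hBi, mul_one, hAi', one_mul]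
  have hCfact : (s : ℂ) • A + ((1 : ℂ) - (s : ℂ)) • B = A * D * B := by
    have h1 : A * ((s : ℂ) • Y) * B = (s : ℂ) • A := by
      rw [Matrix.mul_smul, Matrix.smul_mul, mul_assoc, hBi', mul_one]
    have h2 : A * (((1 : ℂ) - (s : ℂ)) • X) * B = ((1 : ℂ) - (s : ℂ)) • B := by
      rw [Matrix.mul_smul, Matrix.smul_mul, hAi, one_mul]
    rw [hD, Matrix.mul_add, Matrix.add_mul, h1, h2]
  have hCfact2 : (s : ℂ) • A + ((1 : ℂ) - (s : ℂ)) • B = B * D * A := by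
    have h1 : B * ((s : ℂ) • Y) * A = (s : ℂ) • A := by
      rw [Matrix.mul_smul, Matrix.smul_mul, hBi, one_mul]
    have h2 : B * (((1 : ℂ) - (s : ℂ)) • X) * A = ((1 : ℂ) - (s : ℂ)) • B := by
      rw [Matrix.mul_smul, Matrix.smul_mul, mul_assoc, hAi', mul_one]
    rw [hD, Matrix.mul_add, Matrix.add_mul, h1, h2]
  have hCinv : ((s : ℂ) • A + ((1 : ℂ) - (s : ℂ)) • B)⁻¹ = Y * (D⁻¹ * X) := by
    rw [hCfact, Matrix.mul_inv_rev, Matrix.mul_inv_rev]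
  have hswap : Y * (D⁻¹ * X) = X * (D⁻¹ * Y) := by
    have h := congrArg Inv.inv (hCfact.symm.trans hCfact2)
    rw [Matrix.mul_inv_rev, Matrix.mul_inv_rev, Matrix.mul_inv_rev,
      Matrix.mul_inv_rev] at h
    exact h
  have key : ((s : ℂ) • X + ((1 : ℂ) - (s : ℂ)) • Y) * D⁻¹ *
      ((s : ℂ) • Y + ((1 : ℂ) - (s : ℂ)) • X)
      = (s : ℂ) • X + ((1 : ℂ) - (s : ℂ)) • Y := by
    rw [← hD, mul_assoc, hDi, mul_one]
  rw [hCinv, hM, ← key]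
  simp only [Matrix.mul_add, Matrix.add_mul, Matrix.mul_sub, Matrix.sub_mul,
    Matrix.mul_smul, Matrix.smul_mul, mul_assoc]
  rw [hswap]
  module
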